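/- Let f : ℝ → ℂ be integrable (f ∈ L¹(ℝ)). Then for every real ξ, the limit as ε → 0+ of (𝔉₊(ξ + iε) − 𝔉₋(ξ − iε)) exists and equals the classical Fourier transform ∫_{−∞}^{∞} f(x)·exp(−2πi ξ x) dx, where 𝔉₊(ζ) = ∫_{−∞}^{0} f(x)e^{−2πiζx} dx for Im ζ > 0 and 𝔉₋(ζ) = −∫_{0}^{∞} f(x)e^{−2πiζx} dx for Im ζ < 0. -/

import Mathlib

open Filter MeasureTheory Real

lemma re_aux (a b x : ℝ) :
    (-2 * (π:ℂ) * Complex.I * ((a:ℂ) + Complex.I * (b:ℂ)) * (x:ℂ)).re = 2*π*b*x := by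
  simp [Complex.mul_re, Complex.mul_im]

lemma side_aux (f : ℝ → ℂ) (hf : Integrable f) (ξ σ : ℝ) (s : Set ℝ)
    (hs : MeasurableSet s)
    (hsign : ∀ x ∈ s, ∀ ε ∈ Set.Ioi (0:ℝ), 2*π*(σ*ε)*x ≤ 0) :
    Tendsto (fun ε : ℝ => ∫ x in s,
        f x * Complex.exp (-2 * (π:ℂ) * Complex.I * ((ξ:ℂ) + Complex.I * ((σ*ε : ℝ):ℂ)) * (x:ℂ)))
      (nhdsWithin 0 (Set.Ioi 0))
      (nhds (∫ x in s, f x * Complex.exp (-2*(π:ℂ)*Complex.I*(ξ:ℂ)*(x:ℂ)))) := by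
  have hmeas := hf.aestronglyMeasurable.restrict (s := s)
  have hlim0 : (∫ x in s, f x * Complex.exp (-2*(π:ℂ)*Complex.I*(ξ:ℂ)*(x:ℂ)))
      = ∫ x in s, f x * Complex.exp (-2 * (π:ℂ) * Complex.I * ((ξ:ℂ) + Complex.I * ((σ*(0:ℝ) : ℝ):ℂ)) * (x:ℂ)) := by
    simp
  rw [hlim0]
  apply tendsto_integral_filter_of_dominated_convergence (bound := fun x => ‖f x‖)
  · filter_upwards with ε
    exact hmeas.mul ((Complex.continuous_exp.comp (by continuity)).aestronglyMeasurable)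
  · filter_upwards [self_mem_nhdsWithin] with ε (hε : ε ∈ Set.Ioi (0:ℝ))
    filter_upwards [ae_restrict_mem hs] with x hx
    rw [norm_mul, Complex.norm_exp, re_aux]
    have : Real.exp (2*π*(σ*ε)*x) ≤ 1 := Real.exp_le_one_iff.mpr (hsign x hx ε hε)
    calc ‖f x‖ * Real.exp (2*π*(σ*ε)*x) ≤ ‖f x‖ * 1 :=
          mul_le_mul_of_nonneg_left this (norm_nonneg _)
      _ = ‖f x‖ := mul_one _
  · exact hf.norm.restrict
  · filter_upwards with x
    have hc : Continuous (fun ε : ℝ =>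
        f x * Complex.exp (-2 * (π:ℂ) * Complex.I * ((ξ:ℂ) + Complex.I * ((σ*ε : ℝ):ℂ)) * (x:ℂ))) := by
      continuity
    exact (hc.tendsto 0).mono_left nhdsWithin_le_nhds

theorem hyperfunction_fourier_eq_classical_of_integrable
    (f : ℝ → ℂ) (hf : Integrable f) (ξ : ℝ) :
    Tendsto (fun ε : ℝ =>
        (∫ x in Set.Iic (0 : ℝ),
            f x * Complex.exp (-2 * (π : ℂ) * Complex.I * ((ξ : ℂ) + Complex.I * ε) * x)) -
        (-∫ x in Set.Ici (0 : ℝ),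
            f x * Complex.exp (-2 * (π : ℂ) * Complex.I * ((ξ : ℂ) - Complex.I * ε) * x)))
      (nhdsWithin 0 (Set.Ioi 0))
      (nhds (∫ x : ℝ, f x * Complex.exp (-2 * (π : ℂ) * Complex.I * (ξ : ℂ) * x))) := by
  have h1 := side_aux f hf ξ 1 (Set.Iic 0) measurableSet_Iic (by
    intro x hx ε hε
    have hx0 : (x:ℝ) ≤ 0 := hx
    have hε0 : (0:ℝ) < ε := hε
    calc 2*π*(1*ε)*x = (2*π)*(ε*x) := by ring
      _ ≤ 0 := mul_nonpos_of_nonneg_of_nonpos (by positivity)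
          (mul_nonpos_of_nonneg_of_nonpos hε0.le hx0))
  have h2 := side_aux f hf ξ (-1) (Set.Ici 0) measurableSet_Ici (by
    intro x hx ε hε
    have hx0 : (0:ℝ) ≤ x := hx
    have hε0 : (0:ℝ) < ε := hε
    have h1 : (0:ℝ) ≤ (2*π)*(ε*x) := by positivity
    calc 2*π*(-1*ε)*x = -((2*π)*(ε*x)) := by ring
      _ ≤ 0 := neg_nonpos_of_nonneg h1)
  have h1' : Tendsto (fun ε : ℝ => ∫ x in Set.Iic (0:ℝ),
        f x * Complex.exp (-2 * (π:ℂ) * Complex.I * ((ξ:ℂ) + Complex.I * ε) * x))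
      (nhdsWithin 0 (Set.Ioi 0))
      (nhds (∫ x in Set.Iic (0:ℝ), f x * Complex.exp (-2*(π:ℂ)*Complex.I*(ξ:ℂ)*x))) := by
    refine h1.congr fun ε => ?_
    congr 1; ext x; norm_num
  have h2' : Tendsto (fun ε : ℝ => ∫ x in Set.Ici (0:ℝ),
        f x * Complex.exp (-2 * (π:ℂ) * Complex.I * ((ξ:ℂ) - Complex.I * ε) * x))
      (nhdsWithin 0 (Set.Ioi 0))
      (nhds (∫ x in Set.Ici (0:ℝ), f x * Complex.exp (-2*(π:ℂ)*Complex.I*(ξ:ℂ)*x))) := by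
    refine h2.congr fun ε => ?_
    congr 1; ext x
    push_cast
    ring_nf
  have hint : ∀ c : ℂ, Integrable (fun x : ℝ => f x * Complex.exp (c * x)) → True := fun _ _ => trivial
  have hInt : Integrable (fun x : ℝ => f x * Complex.exp (-2*(π:ℂ)*Complex.I*(ξ:ℂ)*x)) := by
    have hb : Integrable (fun x : ℝ =>
        Complex.exp (-2*(π:ℂ)*Complex.I*(ξ:ℂ)*(x:ℝ)) * f x) := by
      apply hf.bdd_mul (c := 1) ((Complex.continuous_exp.comp (by continuity)).aestronglyMeasurable)
      refine Filter.Eventually.of_forall (fun x => ?_)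
      simp only [Function.comp_apply]
      rw [Complex.norm_exp]
      have : (-2*(π:ℂ)*Complex.I*(ξ:ℂ)*(x:ℂ)).re = 0 := by
        simp [Complex.mul_re, Complex.mul_im]
      rw [this, Real.exp_zero]
    simpa [mul_comm] using hb
  have hsplit : (∫ x : ℝ, f x * Complex.exp (-2*(π:ℂ)*Complex.I*(ξ:ℂ)*x))
      = (∫ x in Set.Iic (0:ℝ), f x * Complex.exp (-2*(π:ℂ)*Complex.I*(ξ:ℂ)*x))
        + (∫ x in Set.Ici (0:ℝ), f x * Complex.exp (-2*(π:ℂ)*Complex.I*(ξ:ℂ)*x)) := by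
    rw [← intervalIntegral.integral_Iic_add_Ioi (b := (0:ℝ)) hInt.integrableOn hInt.integrableOn,
      integral_Ici_eq_integral_Ioi]
  rw [hsplit]
  simpa [sub_neg_eq_add] using h1'.add h2'
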